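/- Let V be a complex vector space, b : V × V → ℂ a symmetric bilinear form with associated quadratic form q(α) = b(α,α), n ≥ 1 an integer, and c ∈ ℂ. Suppose G : V^{2n} → ℂ is a multilinear map that is symmetric (invariant under all permutations of its arguments) and satisfies G(α, α, …, α) = c · ((2n)!/(n! · 2ⁿ)) · q(α)ⁿ for every α ∈ V. Then for all α₁, …, α_{2n} ∈ V one has G(α₁, …, α_{2n}) = c · Σ_σ Π_{i < σ(i)} b(α_i, α_{σ(i)}), where the sum runs over all fixed-point-free involutions σ of {1, …, 2n} (equivalently, over all perfect matchings of {1, …, 2n}) and the product runs over the pairs {i, σ(i)} of the matching. -/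

import Mathlib

open scoped Classical


open Finset in
theorem polar_aux {m : ℕ} (r : Fin m → Fin m) :
    ∑ s ∈ Finset.univ.filter (fun s : Finset (Fin m) => ∀ k, r k ∈ s),
        (-1 : ℂ) ^ (m - s.card)
      = if Function.Surjective r then 1 else 0 := by
  classical
  have h1 : ∑ s ∈ Finset.univ.filter (fun s : Finset (Fin m) => ∀ k, r k ∈ s),
        (-1 : ℂ) ^ (m - s.card)
      = ∑ t ∈ (Finset.image r Finset.univ)ᶜ.powerset, (-1 : ℂ) ^ t.card := by
    refine Finset.sum_nbij' (fun s => sᶜ) (fun t => tᶜ) ?_ ?_ ?_ ?_ ?_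
    · intro s hs
      simp only [mem_filter, mem_univ, true_and] at hs
      simp only [mem_powerset]
      intro x hx
      simp only [mem_compl] at hx ⊢
      intro hmem
      rcases mem_image.1 hmem with ⟨k, _, rfl⟩
      exact hx (hs k)
    · intro t ht
      simp only [mem_powerset] at ht
      simp only [mem_filter, mem_univ, true_and]
      intro k
      by_contra hk
      have : r k ∈ tᶜᶜ := by simpa using hk
      rw [compl_compl] at this
      have := ht this
      simp at this
    · intro s _; simp
    · intro t _; simp
    · intro s _
      congr 1
      rw [Finset.card_compl, Fintype.card_fin]
  rw [h1]
  have h2 : (∑ t ∈ (Finset.image r Finset.univ)ᶜ.powerset, (-1 : ℂ) ^ t.card)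
      = ((∑ t ∈ (Finset.image r Finset.univ)ᶜ.powerset, (-1 : ℤ) ^ t.card : ℤ) : ℂ) := by
    push_cast; rfl
  rw [h2, Finset.sum_powerset_neg_one_pow_card]
  have h3 : (Finset.image r Finset.univ)ᶜ = ∅ ↔ Function.Surjective r := by
    rw [show ((∅ : Finset (Fin m)) = Finset.univᶜ) from Finset.compl_univ.symm, compl_inj_iff]
    constructor
    · intro h x
      have : x ∈ Finset.image r Finset.univ := by rw [h]; exact mem_univ x
      rcases mem_image.1 this with ⟨k, _, hk⟩; exact ⟨k, hk⟩
    · intro h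
      apply Finset.eq_univ_iff_forall.2
      intro x; rcases h x with ⟨k, hk⟩; exact mem_image.2 ⟨k, mem_univ k, hk⟩
  by_cases hs : Function.Surjective r
  · rw [if_pos (h3.2 hs), if_pos hs]; norm_num
  · rw [if_neg (fun h => hs (h3.1 h)), if_neg hs]; norm_num

open Finset in
theorem polarization {m : ℕ} {V : Type*} [AddCommGroup V] [Module ℂ V]
    (F : MultilinearMap ℂ (fun _ : Fin m => V) ℂ)
    (hsym : ∀ (σ : Equiv.Perm (Fin m)) (α : Fin m → V), F (α ∘ σ) = F α)
    (h0 : ∀ x : V, F (fun _ => x) = 0) (α : Fin m → V) : F α = 0 := by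
  classical
  have key : ∑ s : Finset (Fin m), (-1:ℂ)^(m - s.card) * F (fun _ => ∑ i ∈ s, α i) = 0 := by
    simp [h0]
  have expand : ∀ s : Finset (Fin m),
      F (fun _ => ∑ i ∈ s, α i) = ∑ r ∈ Fintype.piFinset (fun _ : Fin m => s),
        F (fun i => α (r i)) := by
    intro s
    exact F.map_sum_finset (fun _ j => α j) (fun _ => s)
  rw [Finset.sum_congr rfl (fun s _ => by rw [expand s, Finset.mul_sum])] at key
  rw [Finset.sum_comm' (s := Finset.univ) (t := fun s => Fintype.piFinset (fun _ : Fin m => s))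
    (t' := Finset.univ)
    (s' := fun r => Finset.univ.filter (fun s : Finset (Fin m) => ∀ k, r k ∈ s))
    (by
      intro s r
      simp [Fintype.mem_piFinset])] at key
  have key2 : ∑ r : Fin m → Fin m,
      (if Function.Surjective r then (1:ℂ) else 0) * F (fun i => α (r i)) = 0 := by
    calc ∑ r : Fin m → Fin m, (if Function.Surjective r then (1:ℂ) else 0) * F (fun i => α (r i))
        = ∑ r : Fin m → Fin m, ∑ s ∈ Finset.univ.filter (fun s : Finset (Fin m) => ∀ k, r k ∈ s),
            (-1:ℂ)^(m - s.card) * F (fun i => α (r i)) := by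
          refine Finset.sum_congr rfl fun r _ => ?_
          rw [← Finset.sum_mul, polar_aux]
      _ = 0 := key
  have key3 : ∑ r ∈ Finset.univ.filter (fun r : Fin m → Fin m => Function.Surjective r),
      F (fun i => α (r i)) = 0 := by
    rw [Finset.sum_filter]
    calc ∑ r : Fin m → Fin m, (if Function.Surjective r then F (fun i => α (r i)) else 0)
        = ∑ r : Fin m → Fin m, (if Function.Surjective r then (1:ℂ) else 0) * F (fun i => α (r i)) :=
          Finset.sum_congr rfl fun r _ => by split <;> simp
      _ = 0 := key2
  have key4 : ∑ σ : Equiv.Perm (Fin m), F (fun i => α (σ i)) = 0 := by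
    rw [← key3]
    refine Finset.sum_bij (fun σ _ => ⇑σ) ?_ ?_ ?_ ?_
    · intro σ _
      simp only [Finset.mem_filter, Finset.mem_univ, true_and]
      exact σ.surjective
    · intro σ _ τ _ h
      exact Equiv.coe_fn_injective h
    · intro r hr
      simp only [Finset.mem_filter, Finset.mem_univ, true_and] at hr
      exact ⟨Equiv.ofBijective r hr.bijective_of_finite, Finset.mem_univ _, rfl⟩
    · intro σ _; rfl
  have key5 : ((m.factorial : ℂ)) * F α = 0 := by
    have hc : ∑ σ : Equiv.Perm (Fin m), F (fun i => α (σ i))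
        = (Fintype.card (Equiv.Perm (Fin m))) • F α := by
      rw [Finset.sum_congr rfl (fun σ _ => by simpa [Function.comp_def] using hsym σ α)]
      simp [Finset.card_univ]
    rw [hc, Fintype.card_perm, Fintype.card_fin, nsmul_eq_mul] at key4
    exact key4
  have : (m.factorial : ℂ) ≠ 0 := Nat.cast_ne_zero.2 m.factorial_ne_zero
  exact (mul_eq_zero.1 key5).resolve_left this



noncomputable def fpfInv (α : Type*) [Fintype α] : Finset (Equiv.Perm α) :=
  Finset.univ.filter (fun σ => σ * σ = 1 ∧ ∀ i, σ i ≠ i)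

theorem mem_fpfInv {α : Type*} [Fintype α] {σ : Equiv.Perm α} :
    σ ∈ fpfInv α ↔ σ * σ = 1 ∧ ∀ i, σ i ≠ i := by
  simp [fpfInv]

theorem fpfInv_apply_apply {α : Type*} {σ : Equiv.Perm α} (h : σ * σ = 1) (x : α) :
    σ (σ x) = x := by
  have := congrArg (fun τ : Equiv.Perm α => τ x) h
  simpa using this

theorem pres {α : Type*} (a j : α) (σ : Equiv.Perm α) (h1 : σ * σ = 1) (ha : σ a = j) :
    ∀ x, (x ≠ a ∧ x ≠ j) ↔ (σ x ≠ a ∧ σ x ≠ j) := by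
  intro x
  have hinv := fpfInv_apply_apply h1
  constructor
  · rintro ⟨hxa, hxj⟩
    constructor
    · intro h; exact hxj (by rw [← hinv x, h, ha])
    · intro h; exact hxa (σ.injective (h.trans ha.symm))
  · rintro ⟨hsa, hsj⟩
    constructor
    · intro h; exact hsj (by rw [h, ha])
    · intro h; exact hsa (by rw [h, ← ha, hinv])

theorem card_fiber {α : Type*} [Fintype α] [DecidableEq α] (a j : α) (hij : j ≠ a) :
    ((fpfInv α).filter (fun σ => σ a = j)).card
      = (fpfInv {x : α // x ≠ a ∧ x ≠ j}).card := by
  have haj : a ≠ j := hij.symm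
  refine Finset.card_bij'
    (fun σ hσ => σ.subtypePerm
      (fun x => (pres a j σ (mem_fpfInv.1 (Finset.mem_filter.1 hσ).1).1 (Finset.mem_filter.1 hσ).2 x).symm))
    (fun τ _ => Equiv.swap a j * Equiv.Perm.ofSubtype τ) ?_ ?_ ?_ ?_
  · -- forward lands in fpfInv of subtype
    intro σ hσ
    obtain ⟨hmem, hfix⟩ := Finset.mem_filter.1 hσ
    obtain ⟨h1, h2⟩ := mem_fpfInv.1 hmem
    rw [mem_fpfInv]
    constructor
    · ext x
      simp [Equiv.Perm.subtypePerm_apply, fpfInv_apply_apply h1]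
    · rintro ⟨x, hx⟩
      simp only [Equiv.Perm.subtypePerm_apply, ne_eq, Subtype.mk.injEq]
      exact h2 x
  · -- backward lands in the fiber
    intro τ hτ
    obtain ⟨h1, h2⟩ := mem_fpfInv.1 hτ
    have hofa : Equiv.Perm.ofSubtype τ a = a :=
      Equiv.Perm.ofSubtype_apply_of_not_mem τ (by simp)
    have hofj : Equiv.Perm.ofSubtype τ j = j :=
      Equiv.Perm.ofSubtype_apply_of_not_mem τ (by simp)
    have hofx : ∀ x (hx : x ≠ a ∧ x ≠ j),
        Equiv.Perm.ofSubtype τ x = ↑(τ ⟨x, hx⟩) :=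
      fun x hx => Equiv.Perm.ofSubtype_apply_of_mem τ hx
    have happ : ∀ x (hx : x ≠ a ∧ x ≠ j),
        (Equiv.swap a j * Equiv.Perm.ofSubtype τ) x = ↑(τ ⟨x, hx⟩) := by
      intro x hx
      rw [Equiv.Perm.mul_apply, hofx x hx,
        Equiv.swap_apply_of_ne_of_ne (τ ⟨x, hx⟩).2.1 (τ ⟨x, hx⟩).2.2]
    have hA : (Equiv.swap a j * Equiv.Perm.ofSubtype τ) a = j := by
      rw [Equiv.Perm.mul_apply, hofa, Equiv.swap_apply_left]
    have hJ : (Equiv.swap a j * Equiv.Perm.ofSubtype τ) j = a := by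
      rw [Equiv.Perm.mul_apply, hofj, Equiv.swap_apply_right]
    rw [Finset.mem_filter]
    refine ⟨mem_fpfInv.2 ⟨?_, ?_⟩, hA⟩
    · ext y
      show (Equiv.swap a j * Equiv.Perm.ofSubtype τ)
        ((Equiv.swap a j * Equiv.Perm.ofSubtype τ) y) = y
      by_cases hya : y = a
      · subst hya; rw [hA, hJ]
      by_cases hyj : y = j
      · subst hyj; rw [hJ, hA]
      · have hy : y ≠ a ∧ y ≠ j := ⟨hya, hyj⟩
        rw [happ y hy, happ _ (τ ⟨y, hy⟩).2]
        have he : (⟨↑(τ ⟨y, hy⟩), (τ ⟨y, hy⟩).2⟩ : {z // z ≠ a ∧ z ≠ j}) = τ ⟨y, hy⟩ := rfl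
        rw [he, fpfInv_apply_apply h1]
    · intro y
      by_cases hya : y = a
      · subst hya; rw [hA]; exact hij
      by_cases hyj : y = j
      · subst hyj; rw [hJ]; exact haj
      · have hy : y ≠ a ∧ y ≠ j := ⟨hya, hyj⟩
        rw [happ y hy]
        intro h
        exact h2 ⟨y, hy⟩ (Subtype.ext h)
  · intro σ hσ
    obtain ⟨hmem, hfix⟩ := Finset.mem_filter.1 hσ
    obtain ⟨h1, _⟩ := mem_fpfInv.1 hmem
    set h := pres a j σ h1 hfix with hh
    ext x
    show Equiv.swap a j ((Equiv.Perm.ofSubtype (σ.subtypePerm (fun x => (h x).symm))) x) = σ x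
    by_cases hxa : x = a
    · subst hxa
      rw [Equiv.Perm.ofSubtype_apply_of_not_mem _ (by simp), Equiv.swap_apply_left, hfix]
    by_cases hxj : x = j
    · subst hxj
      rw [Equiv.Perm.ofSubtype_apply_of_not_mem _ (by simp), Equiv.swap_apply_right,
        ← hfix, fpfInv_apply_apply h1]
    · have hx : x ≠ a ∧ x ≠ j := ⟨hxa, hxj⟩
      have hof : (Equiv.Perm.ofSubtype (σ.subtypePerm (fun x => (h x).symm))) x = σ x :=
        Equiv.Perm.ofSubtype_apply_of_mem (p := fun x => x ≠ a ∧ x ≠ j) (σ.subtypePerm (fun x => (h x).symm)) hx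
      rw [hof]
      exact Equiv.swap_apply_of_ne_of_ne ((h x).1 hx).1 ((h x).1 hx).2
  · intro τ hτ
    ext x
    show (Equiv.swap a j * Equiv.Perm.ofSubtype τ) ↑x = ↑(τ x)
    rw [Equiv.Perm.mul_apply, Equiv.Perm.ofSubtype_apply_of_mem τ x.2]
    exact Equiv.swap_apply_of_ne_of_ne (τ ⟨↑x, x.2⟩).2.1 (τ ⟨↑x, x.2⟩).2.2


theorem card_fpfInv_congr {α β : Type*} [Fintype α] [Fintype β] (e : α ≃ β) :
    (fpfInv α).card = (fpfInv β).card := by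
  refine Finset.card_bij (fun σ _ => e.permCongr σ) ?_ ?_ ?_
  · intro σ hσ
    rw [mem_fpfInv] at hσ ⊢
    constructor
    · have : e.permCongr σ * e.permCongr σ = e.permCongr (σ * σ) := by
        ext x; simp [Equiv.permCongr_apply]
      rw [this, hσ.1]
      ext x; simp
    · intro i
      simp only [Equiv.permCongr_apply, ne_eq]
      intro h
      exact hσ.2 (e.symm i) (by simpa using congrArg e.symm h)
  · intro σ _ τ _ h
    have : ∀ x, σ x = τ x := by
      intro x
      have := congrArg (fun ρ : Equiv.Perm β => e.symm (ρ (e x))) h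
      simpa [Equiv.permCongr_apply] using this
    exact Equiv.ext this
  · intro τ hτ
    refine ⟨e.symm.permCongr τ, ?_, ?_⟩
    · rw [mem_fpfInv] at hτ ⊢
      constructor
      · have : e.symm.permCongr τ * e.symm.permCongr τ = e.symm.permCongr (τ * τ) := by
          ext x; simp [Equiv.permCongr_apply]
        rw [this, hτ.1]; ext x; simp
      · intro i
        simp only [Equiv.permCongr_apply, ne_eq]
        intro h
        exact hτ.2 (e i) (by simpa using congrArg e h)
    · ext x; simp [Equiv.permCongr_apply]

theorem card_subtype_two {α : Type*} [Fintype α] [DecidableEq α] (a j : α) (hij : j ≠ a) :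
    Fintype.card {x : α // x ≠ a ∧ x ≠ j} = Fintype.card α - 2 := by
  classical
  have hfil : (Finset.univ.filter (fun x : α => x ≠ a ∧ x ≠ j))
      = (Finset.univ.erase a).erase j := by
    ext x
    simp only [Finset.mem_filter, Finset.mem_erase, Finset.mem_univ, true_and, and_true]
    tauto
  rw [Fintype.card_subtype, hfil,
    Finset.card_erase_of_mem (Finset.mem_erase.2 ⟨hij, Finset.mem_univ j⟩),
    Finset.card_erase_of_mem (Finset.mem_univ a), Finset.card_univ]
  omega

theorem card_fpfInv_succ (n : ℕ) :
    (fpfInv (Fin (2 * (n + 1)))).card = (2 * n + 1) * (fpfInv (Fin (2 * n))).card := by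
  have ha : (0:ℕ) < 2 * (n+1) := by omega
  set a : Fin (2 * (n + 1)) := ⟨0, ha⟩ with hadef
  have hcardsum : (fpfInv (Fin (2 * (n + 1)))).card
      = ∑ j ∈ Finset.univ.erase a,
          ((fpfInv (Fin (2 * (n + 1)))).filter (fun σ => σ a = j)).card := by
    apply Finset.card_eq_sum_card_fiberwise
    intro σ hσ
    exact Finset.mem_erase.2 ⟨(mem_fpfInv.1 hσ).2 a, Finset.mem_univ _⟩
  rw [hcardsum]
  have hterm : ∀ j ∈ Finset.univ.erase a,
      ((fpfInv (Fin (2 * (n + 1)))).filter (fun σ => σ a = j)).card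
        = (fpfInv (Fin (2 * n))).card := by
    intro j hj
    have hja : j ≠ a := (Finset.mem_erase.1 hj).1
    rw [card_fiber a j hja]
    have hcard : Fintype.card {x : Fin (2 * (n + 1)) // x ≠ a ∧ x ≠ j} = 2 * n := by
      rw [card_subtype_two a j hja, Fintype.card_fin]; omega
    exact card_fpfInv_congr (Fintype.equivFinOfCardEq hcard)
  rw [Finset.sum_congr rfl hterm, Finset.sum_const,
    Finset.card_erase_of_mem (Finset.mem_univ a), Finset.card_univ, Fintype.card_fin,
    smul_eq_mul]
  congr 1

theorem card_fpfInv_zero : (fpfInv (Fin 0)).card = 1 := by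
  have : fpfInv (Fin 0) = Finset.univ := by
    apply Finset.filter_true_of_mem
    intro σ _
    constructor
    · ext x; exact absurd x.2 (by omega)
    · intro i; exact absurd i.2 (by omega)
  rw [this, Finset.card_univ, Fintype.card_perm, Fintype.card_fin]
  rfl

theorem card_fpfInv_mul (n : ℕ) :
    (fpfInv (Fin (2 * n))).card * (2 ^ n * n.factorial) = (2 * n).factorial := by
  induction n with
  | zero => simp [card_fpfInv_zero, Nat.factorial]
  | succ n ih =>
    rw [card_fpfInv_succ]
    rw [show 2 * (n+1) = (2*n+1)+1 from by ring, Nat.factorial_succ,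
      show (2*n+1) = (2*n)+1 from rfl, Nat.factorial_succ, pow_succ, Nat.factorial_succ, ← ih]
    ring

theorem fpfInv_apply_apply' {α : Type*} {σ : Equiv.Perm α} (h : σ * σ = 1) (x : α) :
    σ (σ x) = x := by
  have := congrArg (fun τ : Equiv.Perm α => τ x) h
  simpa using this

section TermUpdate
variable {m : ℕ} {V : Type*} [AddCommGroup V] [Module ℂ V]

theorem term_update [inst : DecidableEq (Fin m)] (b : V →ₗ[ℂ] V →ₗ[ℂ] ℂ)
    (σ : Equiv.Perm (Fin m)) (h1 : σ * σ = 1) (h2 : ∀ i, σ i ≠ i)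
    (α : Fin m → V) (j : Fin m) (v : V) :
    (∏ i ∈ Finset.univ.filter (fun i : Fin m => i < σ i),
        b (Function.update α j v i) (Function.update α j v (σ i)))
      = (∏ i ∈ (Finset.univ.filter (fun i : Fin m => i < σ i)).erase
            (if j < σ j then j else σ j), b (α i) (α (σ i)))
        * (if j < σ j then b v (α (σ j)) else b (α (σ j)) v) := by
  have hinv := fpfInv_apply_apply' h1
  set P := Finset.univ.filter (fun i : Fin m => i < σ i) with hP
  set i0 : Fin m := if j < σ j then j else σ j with hi0
  have hi0P : i0 ∈ P := by
    rw [hi0]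
    split
    · next h => exact Finset.mem_filter.2 ⟨Finset.mem_univ _, h⟩
    · next h =>
      have hlt : σ j < j := lt_of_le_of_ne (not_lt.1 h) (h2 j)
      exact Finset.mem_filter.2 ⟨Finset.mem_univ _, by rw [hinv j]; exact hlt⟩
  have hother : ∀ i ∈ P.erase i0, i ≠ j ∧ σ i ≠ j := by
    intro i hi
    obtain ⟨hne, hiP⟩ := Finset.mem_erase.1 hi
    have hiP' := (Finset.mem_filter.1 hiP).2
    by_cases hc : j < σ j
    · rw [hi0, if_pos hc] at hne
      constructor
      · exact hne
      · intro h
        have : i = σ j := by rw [← h, hinv]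
        subst this
        have : σ (σ j) = j := hinv j
        rw [this] at hiP'
        exact absurd (hiP'.trans hc) (lt_irrefl _)
    · rw [hi0, if_neg hc] at hne
      constructor
      · intro h; subst h; exact hc hiP'
      · intro h
        have : i = σ j := by rw [← h, hinv]
        exact hne this
  rw [← Finset.mul_prod_erase P _ hi0P, mul_comm]
  congr 1
  · apply Finset.prod_congr rfl
    intro i hi
    obtain ⟨hij, hsij⟩ := hother i hi
    rw [Function.update_of_ne hij, Function.update_of_ne hsij]
  · rw [hi0]
    by_cases hc : j < σ j
    · rw [if_pos hc, if_pos hc, Function.update_self, Function.update_of_ne (h2 j)]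
    · rw [if_neg hc, if_neg hc, hinv j, Function.update_self, Function.update_of_ne (h2 j)]

end TermUpdate


section MatchMap
variable {V : Type*} [AddCommGroup V] [Module ℂ V]

noncomputable def matchMap (m : ℕ) (b : V →ₗ[ℂ] V →ₗ[ℂ] ℂ) :
    MultilinearMap ℂ (fun _ : Fin m => V) ℂ where
  toFun α := ∑ σ ∈ fpfInv (Fin m),
    ∏ i ∈ Finset.univ.filter (fun i : Fin m => i < σ i), b (α i) (α (σ i))
  map_update_add' := by
    intro inst α j x y
    rw [← Finset.sum_add_distrib]
    refine Finset.sum_congr rfl fun σ hσ => ?_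
    obtain ⟨h1, h2⟩ := mem_fpfInv.1 hσ
    rw [term_update b σ h1 h2 α j x, term_update b σ h1 h2 α j y,
      term_update b σ h1 h2 α j (x + y)]
    by_cases hc : j < σ j
    · simp only [if_pos hc, map_add, LinearMap.add_apply]
      ring
    · simp only [if_neg hc, map_add]
      ring
  map_update_smul' := by
    intro inst α j t x
    rw [Finset.smul_sum]
    refine Finset.sum_congr rfl fun σ hσ => ?_
    obtain ⟨h1, h2⟩ := mem_fpfInv.1 hσ
    rw [term_update b σ h1 h2 α j x, term_update b σ h1 h2 α j (t • x)]
    by_cases hc : j < σ j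
    · simp only [if_pos hc, map_smul, LinearMap.smul_apply, smul_eq_mul]
      ring
    · simp only [if_neg hc, map_smul, smul_eq_mul]
      ring

theorem matchMap_apply (m : ℕ) (b : V →ₗ[ℂ] V →ₗ[ℂ] ℂ) (α : Fin m → V) :
    matchMap m b α = ∑ σ ∈ fpfInv (Fin m),
      ∏ i ∈ Finset.univ.filter (fun i : Fin m => i < σ i), b (α i) (α (σ i)) := rfl

theorem card_P {n : ℕ} {σ : Equiv.Perm (Fin (2 * n))} (h1 : σ * σ = 1)
    (h2 : ∀ i, σ i ≠ i) :
    (Finset.univ.filter (fun i : Fin (2 * n) => i < σ i)).card = n := by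
  have hinv := fpfInv_apply_apply' h1
  have hsplit : (Finset.univ.filter (fun i : Fin (2 * n) => i < σ i)).card
      + (Finset.univ.filter (fun i : Fin (2 * n) => ¬ i < σ i)).card = 2 * n := by
    rw [Finset.card_filter_add_card_filter_not, Finset.card_univ, Fintype.card_fin]
  have hbij : (Finset.univ.filter (fun i : Fin (2 * n) => ¬ i < σ i)).card
      = (Finset.univ.filter (fun i : Fin (2 * n) => i < σ i)).card := by
    refine Finset.card_bij (fun i _ => σ i) ?_ ?_ ?_
    · intro i hi
      have hi' := (Finset.mem_filter.1 hi).2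
      have : σ i < i := lt_of_le_of_ne (not_lt.1 hi') (h2 i)
      exact Finset.mem_filter.2 ⟨Finset.mem_univ _, by rw [hinv i]; exact this⟩
    · intro i _ k _ h
      exact σ.injective h
    · intro j hj
      have hj' := (Finset.mem_filter.1 hj).2
      refine ⟨σ j, Finset.mem_filter.2 ⟨Finset.mem_univ _, ?_⟩, hinv j⟩
      rw [hinv j, not_lt]
      exact le_of_lt hj'
  omega

theorem matchMap_diag (n : ℕ) (b : V →ₗ[ℂ] V →ₗ[ℂ] ℂ) (x : V) :
    matchMap (2 * n) b (fun _ => x)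
      = ((fpfInv (Fin (2 * n))).card : ℂ) * (b x x) ^ n := by
  rw [matchMap_apply]
  rw [Finset.sum_congr rfl (fun σ hσ => ?_), Finset.sum_const, nsmul_eq_mul]
  obtain ⟨h1, h2⟩ := mem_fpfInv.1 hσ
  rw [Finset.prod_const, card_P h1 h2]

theorem prod_conj {m : ℕ} (b : V →ₗ[ℂ] V →ₗ[ℂ] ℂ) (hb : ∀ x y : V, b x y = b y x)
    (π σ : Equiv.Perm (Fin m)) (h1 : σ * σ = 1) (h2 : ∀ i, σ i ≠ i) (α : Fin m → V) :
    ∏ i ∈ Finset.univ.filter (fun i : Fin m => i < σ i), b (α (π i)) (α (π (σ i)))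
      = ∏ j ∈ Finset.univ.filter (fun j : Fin m => j < (π * σ * π⁻¹) j),
          b (α j) (α ((π * σ * π⁻¹) j)) := by
  have hinv := fpfInv_apply_apply' h1
  set τ := π * σ * π⁻¹ with hτ
  have htπ : ∀ i, τ (π i) = π (σ i) := by
    intro i
    simp [hτ, Equiv.Perm.mul_apply]
  refine Finset.prod_bij'
    (fun i _ => if π i < π (σ i) then π i else π (σ i))
    (fun j _ => if π⁻¹ j < σ (π⁻¹ j) then π⁻¹ j else σ (π⁻¹ j)) ?_ ?_ ?_ ?_ ?_
  · intro i hi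
    beta_reduce
    have hi' := (Finset.mem_filter.1 hi).2
    by_cases hc : π i < π (σ i)
    · rw [if_pos hc]
      exact Finset.mem_filter.2 ⟨Finset.mem_univ _, by rw [htπ]; exact hc⟩
    · rw [if_neg hc]
      have hne : π (σ i) ≠ π i := fun h => (ne_of_gt hi') (π.injective h)
      have hlt : π (σ i) < π i := lt_of_le_of_ne (not_lt.1 hc) hne
      refine Finset.mem_filter.2 ⟨Finset.mem_univ _, ?_⟩
      have hx : τ (π (σ i)) = π i := by rw [htπ (σ i), hinv]
      rw [hx]; exact hlt
  · intro j hj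
    beta_reduce
    by_cases hc : π⁻¹ j < σ (π⁻¹ j)
    · rw [if_pos hc]; exact Finset.mem_filter.2 ⟨Finset.mem_univ _, hc⟩
    · rw [if_neg hc]
      have hlt : σ (π⁻¹ j) < π⁻¹ j := lt_of_le_of_ne (not_lt.1 hc) (h2 _)
      exact Finset.mem_filter.2 ⟨Finset.mem_univ _, by rw [hinv]; exact hlt⟩
  · intro i hi
    beta_reduce
    have hi' := (Finset.mem_filter.1 hi).2
    by_cases hc : π i < π (σ i)
    · rw [if_pos hc]
      simp only [Equiv.Perm.coe_inv, Equiv.symm_apply_apply]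
      rw [if_pos hi']
    · rw [if_neg hc]
      simp only [Equiv.Perm.coe_inv, Equiv.symm_apply_apply]
      rw [if_neg (by rw [hinv]; exact not_lt.2 (le_of_lt hi')), hinv]
  · intro j hj
    beta_reduce
    have hjτ := (Finset.mem_filter.1 hj).2
    have hτj : τ j = π (σ (π⁻¹ j)) := by simp [hτ, Equiv.Perm.mul_apply]
    by_cases hc : π⁻¹ j < σ (π⁻¹ j)
    · rw [if_pos hc, ((Equiv.Perm.eq_inv_iff_eq (f := π) (x := π⁻¹ j) (y := j)).1 rfl),
        if_pos (by rw [← hτj]; exact hjτ)]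
    · rw [if_neg hc, hinv, ((Equiv.Perm.eq_inv_iff_eq (f := π) (x := π⁻¹ j) (y := j)).1 rfl),
        if_neg (by rw [← hτj]; exact not_lt.2 (le_of_lt hjτ))]
  · intro i hi
    beta_reduce
    by_cases hc : π i < π (σ i)
    · rw [if_pos hc, htπ]
    · rw [if_neg hc]
      have hx : τ (π (σ i)) = π i := by rw [htπ (σ i), hinv]
      rw [hx]
      exact hb _ _

theorem matchMap_comp (m : ℕ) (b : V →ₗ[ℂ] V →ₗ[ℂ] ℂ) (hb : ∀ x y : V, b x y = b y x)
    (π : Equiv.Perm (Fin m)) (α : Fin m → V) :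
    matchMap m b (α ∘ π) = matchMap m b α := by
  rw [matchMap_apply, matchMap_apply]
  refine Finset.sum_bij (fun σ _ => π * σ * π⁻¹) ?_ ?_ ?_ ?_
  · intro σ hσ
    obtain ⟨h1, h2⟩ := mem_fpfInv.1 hσ
    refine mem_fpfInv.2 ⟨?_, ?_⟩
    · have : (π * σ * π⁻¹) * (π * σ * π⁻¹) = π * (σ * σ) * π⁻¹ := by group
      rw [this, h1]; group
    · intro i h
      simp only [Equiv.Perm.mul_apply] at h
      have : σ (π⁻¹ i) = π⁻¹ i := by
        have := congrArg (fun x => π⁻¹ x) h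
        simpa using this
      exact h2 _ this
  · intro σ hσ ρ hρ h
    have := congrArg (fun x => π⁻¹ * x * π) h
    simpa [mul_assoc] using this
  · intro ρ hρ
    obtain ⟨h1, h2⟩ := mem_fpfInv.1 hρ
    refine ⟨π⁻¹ * ρ * π, mem_fpfInv.2 ⟨?_, ?_⟩, by group⟩
    · have : (π⁻¹ * ρ * π) * (π⁻¹ * ρ * π) = π⁻¹ * (ρ * ρ) * π := by group
      rw [this, h1]; group
    · intro i h
      simp only [Equiv.Perm.mul_apply] at h
      have : ρ (π i) = π i := by
        have := congrArg (fun x => π x) h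
        simpa using this
      exact h2 _ this
  · intro σ hσ
    obtain ⟨h1, h2⟩ := mem_fpfInv.1 hσ
    have := prod_conj b hb π σ h1 h2 α
    simpa [Function.comp] using this

end MatchMap

open scoped Classical in
/-- Polarization of the Fujiki relation: if a symmetric `2n`-multilinear map `G`
on a complex vector space `V` satisfies `G(α,…,α) = c·((2n)!/(n!·2ⁿ))·q(α)ⁿ`
for every `α`, where `q(α) = b(α,α)` for a symmetric bilinear form `b`, then
`G(α₁,…,α_{2n}) = c · Σ_σ Π_{i < σ(i)} b(α_i, α_{σ(i)})`, the sum running over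
all fixed-point-free involutions `σ` of `{1,…,2n}` (perfect matchings). -/
theorem fujiki_polarization (V : Type*) [AddCommGroup V] [Module ℂ V]
    (b : V →ₗ[ℂ] V →ₗ[ℂ] ℂ) (hb : ∀ x y : V, b x y = b y x)
    (n : ℕ) (hn : 1 ≤ n) (c : ℂ)
    (G : MultilinearMap ℂ (fun _ : Fin (2 * n) => V) ℂ)
    (hsym : ∀ (σ : Equiv.Perm (Fin (2 * n))) (α : Fin (2 * n) → V),
      G (α ∘ σ) = G α)
    (hdiag : ∀ α : V,
      G (fun _ => α)
        = c * ((Nat.factorial (2 * n) : ℂ) / ((Nat.factorial n : ℂ) * 2 ^ n))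
            * (b α α) ^ n) :
    ∀ α : Fin (2 * n) → V,
      G α = c * ∑ σ ∈ Finset.univ.filter
          (fun σ : Equiv.Perm (Fin (2 * n)) => σ * σ = 1 ∧ ∀ i, σ i ≠ i),
        ∏ i ∈ Finset.univ.filter (fun i : Fin (2 * n) => i < σ i),
          b (α i) (α (σ i)) := by
  intro α
  have hfilter : Finset.univ.filter
      (fun σ : Equiv.Perm (Fin (2 * n)) => σ * σ = 1 ∧ ∀ i, σ i ≠ i)
        = fpfInv (Fin (2 * n)) := by
    ext σ; simp [fpfInv]
  set M := matchMap (2 * n) b with hM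
  have hne1 : ((Nat.factorial n : ℂ)) ≠ 0 := Nat.cast_ne_zero.2 n.factorial_ne_zero
  have hne2 : ((2 : ℂ)) ^ n ≠ 0 := pow_ne_zero _ two_ne_zero
  have hcount : (((fpfInv (Fin (2 * n))).card : ℕ) : ℂ)
      = (Nat.factorial (2 * n) : ℂ) / ((Nat.factorial n : ℂ) * 2 ^ n) := by
    have h := card_fpfInv_mul n
    have h' : (((fpfInv (Fin (2 * n))).card : ℕ) : ℂ) * (2 ^ n * (Nat.factorial n : ℂ))
        = (Nat.factorial (2 * n) : ℂ) := by exact_mod_cast congrArg (Nat.cast (R := ℂ)) h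
    field_simp
    linear_combination h'
  have hdiagF : ∀ x : V, (G - c • M) (fun _ => x) = 0 := by
    intro x
    rw [MultilinearMap.sub_apply, MultilinearMap.smul_apply, hdiag x, hM,
      matchMap_diag n b x, hcount, smul_eq_mul]
    ring
  have hsymF : ∀ (π : Equiv.Perm (Fin (2 * n))) (β : Fin (2 * n) → V),
      (G - c • M) (β ∘ π) = (G - c • M) β := by
    intro π β
    rw [MultilinearMap.sub_apply, MultilinearMap.sub_apply, MultilinearMap.smul_apply,
      MultilinearMap.smul_apply, hsym π β, hM, matchMap_comp (2 * n) b hb π β]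
  have hzero := polarization (G - c • M) hsymF hdiagF α
  rw [MultilinearMap.sub_apply, MultilinearMap.smul_apply, sub_eq_zero] at hzero
  rw [hzero, hM, smul_eq_mul, matchMap_apply, hfilter]
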